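/- Incompleteness of support in a finite signature with infinitely many forced constants: if the language contains infinitely many constants c₀, c₁, c₂, … and T is a theory (e.g., PA in this expanded signature), then there exists a consistent base B supporting all axioms of T together with each atomic sentence cᵢ = 0, such that B supports equations not derivable in T; hence the Δ₀-transfer property (supported Δ₀-sentences are T-derivable) fails for such B. -/

import Mathlib

namespace PTS

/-- An atomic rule: finitely many atomic premises and an atomic conclusion. -/
structure ARule (Atom : Type) where
  prems : List Atom
  concl : Atom

/-- A base is a set of atomic rules. -/
abbrev Base (Atom : Type) := Set (ARule Atom)

/-- Atomic derivability from a base. -/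
inductive ADeriv {Atom : Type} (B : Base Atom) : Atom → Prop
  | app (r : ARule Atom) (hr : r ∈ B) (h : ∀ p ∈ r.prems, ADeriv B p) : ADeriv B r.concl

/-- Terms of arithmetic (signature ⟨0,S,+,×⟩, with extra constants from `C`),
with de Bruijn variables. -/
inductive Tm (C : Type) : Type
  | var : ℕ → Tm C
  | const : C → Tm C
  | zero : Tm C
  | succ : Tm C → Tm C
  | add : Tm C → Tm C → Tm C
  | mul : Tm C → Tm C → Tm C

variable {C : Type}

def Tm.subst : Tm C → (ℕ → Tm C) → Tm C
  | .var n, σ => σ n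
  | .const c, _ => .const c
  | .zero, _ => .zero
  | .succ t, σ => .succ (t.subst σ)
  | .add t s, σ => .add (t.subst σ) (s.subst σ)
  | .mul t s, σ => .mul (t.subst σ) (s.subst σ)

def Tm.liftBy (t : Tm C) (k : ℕ) : Tm C := t.subst fun n => .var (n + k)

def Tm.lift (t : Tm C) : Tm C := t.liftBy 1

/-- A term is closed when it contains no variables. -/
def Tm.Closed : Tm C → Prop
  | .var _ => False
  | .const _ => True
  | .zero => True
  | .succ t => t.Closed
  | .add t s => t.Closed ∧ s.Closed
  | .mul t s => t.Closed ∧ s.Closed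

/-- Formulas with primitives →, ∧, ∀, ⊥ and atomic equations. -/
inductive Fm (C : Type) : Type
  | eq : Tm C → Tm C → Fm C
  | falsum : Fm C
  | imp : Fm C → Fm C → Fm C
  | and : Fm C → Fm C → Fm C
  | all : Fm C → Fm C

def liftSub (σ : ℕ → Tm C) : ℕ → Tm C
  | 0 => .var 0
  | n + 1 => (σ n).lift

def Fm.subst : Fm C → (ℕ → Tm C) → Fm C
  | .eq t s, σ => .eq (t.subst σ) (s.subst σ)
  | .falsum, _ => .falsum
  | .imp φ ψ, σ => .imp (φ.subst σ) (ψ.subst σ)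
  | .and φ ψ, σ => .and (φ.subst σ) (ψ.subst σ)
  | .all φ, σ => .all (φ.subst (liftSub σ))

def sub0 (t : Tm C) : ℕ → Tm C
  | 0 => t
  | n + 1 => .var n

/-- Instantiation of the outermost bound variable: `φ[x₀ ↦ t]`. -/
def Fm.inst (φ : Fm C) (t : Tm C) : Fm C := φ.subst (sub0 t)

def Fm.neg (φ : Fm C) : Fm C := φ.imp .falsum
def Fm.or (φ ψ : Fm C) : Fm C := (φ.neg.and ψ.neg).neg
def Fm.ex (φ : Fm C) : Fm C := (Fm.all φ.neg).neg
def Fm.lift1 (φ : Fm C) : Fm C := φ.subst fun n => .var (n + 1)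

/-- `a < b`, expressed arithmetically as ∃y (S(a + y) = b). -/
def ltF (a b : Tm C) : Fm C := Fm.ex (.eq (.succ (.add a.lift (.var 0))) b.lift)

def Tm.VarsLt : Tm C → ℕ → Prop
  | .var k, n => k < n
  | .const _, _ => True
  | .zero, _ => True
  | .succ t, n => t.VarsLt n
  | .add t s, n => t.VarsLt n ∧ s.VarsLt n
  | .mul t s, n => t.VarsLt n ∧ s.VarsLt n

def Fm.ClosedUnder : Fm C → ℕ → Prop
  | .eq t s, n => t.VarsLt n ∧ s.VarsLt n
  | .falsum, _ => True
  | .imp φ ψ, n => φ.ClosedUnder n ∧ ψ.ClosedUnder n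
  | .and φ ψ, n => φ.ClosedUnder n ∧ ψ.ClosedUnder n
  | .all φ, n => φ.ClosedUnder (n + 1)

/-- A sentence is a formula with no free variables. -/
def Fm.Sentence (φ : Fm C) : Prop := φ.ClosedUnder 0

def liftCtx (Γ : Set (Fm C)) : Set (Fm C) := Fm.lift1 '' Γ

/-- Classical natural deduction for first-order logic with equality. -/
inductive Prv : Set (Fm C) → Fm C → Prop
  | ax {Γ : Set (Fm C)} {φ} : φ ∈ Γ → Prv Γ φ
  | impI {Γ : Set (Fm C)} {φ ψ : Fm C} : Prv (insert φ Γ) ψ → Prv Γ (φ.imp ψ)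
  | impE {Γ : Set (Fm C)} {φ ψ : Fm C} : Prv Γ (φ.imp ψ) → Prv Γ φ → Prv Γ ψ
  | andI {Γ : Set (Fm C)} {φ ψ : Fm C} : Prv Γ φ → Prv Γ ψ → Prv Γ (φ.and ψ)
  | andE1 {Γ : Set (Fm C)} {φ ψ : Fm C} : Prv Γ (φ.and ψ) → Prv Γ φ
  | andE2 {Γ : Set (Fm C)} {φ ψ : Fm C} : Prv Γ (φ.and ψ) → Prv Γ ψ
  | allI {Γ : Set (Fm C)} {φ : Fm C} : Prv (liftCtx Γ) φ → Prv Γ (.all φ)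
  | allE {Γ : Set (Fm C)} {φ : Fm C} (t : Tm C) : Prv Γ (.all φ) → Prv Γ (φ.inst t)
  | byContra {Γ : Set (Fm C)} {φ : Fm C} : Prv (insert φ.neg Γ) .falsum → Prv Γ φ
  | eqRefl {Γ : Set (Fm C)} (t : Tm C) : Prv Γ (.eq t t)
  | eqSubst {Γ : Set (Fm C)} (φ : Fm C) (t s : Tm C) :
      Prv Γ (.eq t s) → Prv Γ (φ.inst t) → Prv Γ (φ.inst s)

/-- Numerals. -/
def num : ℕ → Tm C
  | 0 => .zero
  | n + 1 => .succ (num n)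

def consE (n : ℕ) (e : ℕ → ℕ) : ℕ → ℕ
  | 0 => n
  | k + 1 => e k

/-- Evaluation of terms in the standard model ℕ. -/
def Tm.val (ι : C → ℕ) (e : ℕ → ℕ) : Tm C → ℕ
  | .var n => e n
  | .const c => ι c
  | .zero => 0
  | .succ t => t.val ι e + 1
  | .add t s => t.val ι e + s.val ι e
  | .mul t s => t.val ι e * s.val ι e

/-- Truth in the standard model ℕ. -/
def Fm.Val (ι : C → ℕ) (e : ℕ → ℕ) : Fm C → Prop
  | .eq t s => t.val ι e = s.val ι e
  | .falsum => False
  | .imp φ ψ => φ.Val ι e → ψ.Val ι e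
  | .and φ ψ => φ.Val ι e ∧ ψ.Val ι e
  | .all φ => ∀ n : ℕ, φ.Val ι (consE n e)

/-- Δ₀ formulas: built from equations and ⊥ by ∧, → and bounded universal
quantification ∀x (x < t → φ) with t not containing x. -/
inductive Delta0 : Fm C → Prop
  | eq (t s : Tm C) : Delta0 (.eq t s)
  | falsum : Delta0 .falsum
  | imp {φ ψ : Fm C} : Delta0 φ → Delta0 ψ → Delta0 (φ.imp ψ)
  | and {φ ψ : Fm C} : Delta0 φ → Delta0 ψ → Delta0 (φ.and ψ)
  | ball {φ : Fm C} (t : Tm C) : Delta0 φ → Delta0 (.all ((ltF (.var 0) t.lift).imp φ))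

/-- The axioms of Robinson arithmetic Q. -/
def QAx : Set (Fm C) :=
  { .all ((Fm.eq (.succ (.var 0)) .zero).neg),
    .all (.all ((Fm.eq (.succ (.var 1)) (.succ (.var 0))).imp (.eq (.var 1) (.var 0)))),
    .all (((Fm.eq (.var 0) .zero).neg).imp (Fm.ex (.eq (.var 1) (.succ (.var 0))))),
    .all (.eq (.add (.var 0) .zero) (.var 0)),
    .all (.all (.eq (.add (.var 1) (.succ (.var 0))) (.succ (.add (.var 1) (.var 0))))),
    .all (.eq (.mul (.var 0) .zero) .zero),
    .all (.all (.eq (.mul (.var 1) (.succ (.var 0))) (.add (.mul (.var 1) (.var 0)) (.var 1)))) }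

/-- The induction axiom for φ. -/
def indAx (φ : Fm C) : Fm C :=
  ((φ.inst .zero).and
      (.all (φ.imp (φ.subst fun n => match n with
        | 0 => .succ (.var 0)
        | k + 1 => .var (k + 1))))).imp (.all φ)

/-- The axioms of Peano arithmetic. -/
def PAAx : Set (Fm C) :=
  ({ .all ((Fm.eq (.succ (.var 0)) .zero).neg),
     .all (.all ((Fm.eq (.succ (.var 1)) (.succ (.var 0))).imp (.eq (.var 1) (.var 0)))),
     .all (.eq (.add (.var 0) .zero) (.var 0)),
     .all (.all (.eq (.add (.var 1) (.succ (.var 0))) (.succ (.add (.var 1) (.var 0))))),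
     .all (.eq (.mul (.var 0) .zero) .zero),
     .all (.all (.eq (.mul (.var 1) (.succ (.var 0))) (.add (.mul (.var 1) (.var 0)) (.var 1)))) }
    : Set (Fm C)) ∪ Set.range indAx

/-- Bases over arithmetic: atoms are (closed) equations, coded as pairs of terms. -/
abbrev ABase (C : Type) := Base (Tm C × Tm C)

def Fm.depth : Fm C → ℕ
  | .eq _ _ => 0
  | .falsum => 0
  | .imp φ ψ => max φ.depth ψ.depth + 1
  | .and φ ψ => max φ.depth ψ.depth + 1
  | .all φ => φ.depth + 1

theorem Fm.depth_subst (φ : Fm C) (σ : ℕ → Tm C) : (φ.subst σ).depth = φ.depth := by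
  induction φ generalizing σ <;> simp [Fm.subst, Fm.depth, *]

/-- The support relation for arithmetic formulas: atoms via atomic derivability,
∧ componentwise, → over all base extensions, ∀ over all closed-term instances,
⊥ iff every closed atom is supported. -/
def Spt (B : ABase C) : Fm C → Prop
  | .eq t s => ADeriv B (t, s)
  | .falsum => ∀ a : Tm C × Tm C, ADeriv B a
  | .imp φ ψ => ∀ D : ABase C, B ⊆ D → Spt D φ → Spt D ψ
  | .and φ ψ => Spt B φ ∧ Spt B ψ
  | .all φ => ∀ t : Tm C, t.Closed → Spt B (φ.inst t)
termination_by φ => φ.depth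
decreasing_by all_goals simp [Fm.depth, Fm.inst, Fm.depth_subst] <;> omega

/-- Support consequence: Γ ⊩ φ. -/
def EntailsA (Γ : Set (Fm C)) (φ : Fm C) : Prop :=
  ∀ B : ABase C, (∀ ψ ∈ Γ, Spt B ψ) → Spt B φ

/-- A consistent base. -/
def ConsistentA (B : ABase C) : Prop := ¬ Spt B (Fm.falsum : Fm C)

/-- A sufficiently strong arithmetical theory. -/
structure SuffStrong (A : Set (Fm C)) : Prop where
  num_iff : ∀ m n : ℕ, Prv A (.eq (num m) (num n)) ↔ m = n
  delta0_dec : ∀ φ : Fm C, Delta0 φ → φ.Sentence → Prv A φ ∨ Prv A φ.neg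

end PTS

open PTS

namespace PTS
variable {C : Type}

theorem Tm.val_subst (ι : C → ℕ) (e : ℕ → ℕ) (t : Tm C) (σ : ℕ → Tm C) :
    (t.subst σ).val ι e = t.val ι (fun n => (σ n).val ι e) := by
  induction t <;> simp [Tm.subst, Tm.val, *]

theorem sub0_env (ι : C → ℕ) (e : ℕ → ℕ) (t : Tm C) :
    (fun k => (sub0 t k).val ι e) = consE (t.val ι e) e := by
  funext k; cases k <;> rfl

theorem liftSub_env (ι : C → ℕ) (e : ℕ → ℕ) (n : ℕ) (σ : ℕ → Tm C) :
    (fun k => (liftSub σ k).val ι (consE n e)) = consE n (fun k => (σ k).val ι e) := by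
  funext k
  cases k with
  | zero => rfl
  | succ k =>
    show ((σ k).lift).val ι (consE n e) = (σ k).val ι e
    rw [Tm.lift, Tm.liftBy, Tm.val_subst]
    rfl

theorem Fm.val_subst (ι : C → ℕ) (φ : Fm C) : ∀ (e : ℕ → ℕ) (σ : ℕ → Tm C),
    (φ.subst σ).Val ι e ↔ φ.Val ι (fun n => (σ n).val ι e) := by
  induction φ with
  | eq t s => intro e σ; simp [Fm.subst, Fm.Val, Tm.val_subst]
  | falsum => intro e σ; simp [Fm.subst, Fm.Val]
  | imp φ ψ ih1 ih2 => intro e σ; simp [Fm.subst, Fm.Val, ih1, ih2]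
  | and φ ψ ih1 ih2 => intro e σ; simp [Fm.subst, Fm.Val, ih1, ih2]
  | all φ ih =>
    intro e σ
    show (∀ n, ((φ.subst (liftSub σ)).Val ι (consE n e))) ↔ _
    refine forall_congr' fun n => ?_
    rw [ih, liftSub_env]

theorem soundness {Γ : Set (Fm C)} {φ : Fm C} (h : Prv Γ φ) (ι : C → ℕ) :
    ∀ e : ℕ → ℕ, (∀ ψ ∈ Γ, ψ.Val ι e) → φ.Val ι e := by
  induction h with
  | ax hφ => exact fun e hΓ => hΓ _ hφ
  | impI _ ih =>
    intro e hΓ hφ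
    exact ih e (by rintro ψ (rfl | h); exact hφ; exact hΓ _ h)
  | impE _ _ ih1 ih2 => exact fun e hΓ => ih1 e hΓ (ih2 e hΓ)
  | andI _ _ ih1 ih2 => exact fun e hΓ => ⟨ih1 e hΓ, ih2 e hΓ⟩
  | andE1 _ ih => exact fun e hΓ => (ih e hΓ).1
  | andE2 _ ih => exact fun e hΓ => (ih e hΓ).2
  | allI _ ih =>
    intro e hΓ n
    refine ih (consE n e) ?_
    rintro ψ ⟨ψ0, hψ0, rfl⟩
    have := hΓ ψ0 hψ0
    rw [Fm.lift1, Fm.val_subst]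
    convert this using 2
    rfl
  | allE t _ ih =>
    intro e hΓ
    rw [Fm.inst, Fm.val_subst, sub0_env]
    exact ih e hΓ (t.val ι e)
  | byContra _ ih =>
    intro e hΓ
    by_contra hn
    refine ih e ?_
    rintro ψ (rfl | h)
    · exact hn
    · exact hΓ _ h
  | eqRefl t => intro e _; rfl
  | eqSubst φ t s _ _ ih1 ih2 =>
    intro e hΓ
    have h1 : t.val ι e = s.val ι e := ih1 e hΓ
    have h2 := ih2 e hΓ
    rw [Fm.inst, Fm.val_subst, sub0_env] at h2 ⊢
    rwa [h1] at h2

theorem indAx_val (ι : C → ℕ) (e : ℕ → ℕ) (φ : Fm C) : (indAx φ).Val ι e := by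
  rintro ⟨h0, hs⟩ n
  induction n with
  | zero =>
    rw [Fm.inst, Fm.val_subst, sub0_env] at h0
    exact h0
  | succ n ih =>
    have := hs n ih
    rw [Fm.val_subst] at this
    convert this using 2
    rename_i k
    cases k <;> rfl

theorem PAAx_val (ι : C → ℕ) (e : ℕ → ℕ) : ∀ α ∈ (PAAx : Set (Fm C)), α.Val ι e := by
  intro α hα
  rcases hα with h | ⟨φ, rfl⟩
  · simp only [Set.mem_insert_iff, Set.mem_singleton_iff] at h
    rcases h with rfl|rfl|rfl|rfl|rfl|rfl <;>
      simp [Fm.Val, Fm.neg, Tm.val, consE, Nat.mul_succ] <;> omega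
  · exact indAx_val ι e φ

/-! ### The base -/

/-- Value of a term with all constants and variables set to 0. -/
def vv (t : Tm ℕ) : ℕ := t.val (fun _ => 0) (fun _ => 0)

/-- The base: all equations true under `vv` are axioms, and any false equation
explodes. -/
def myB : ABase ℕ :=
  {r | r.prems = [] ∧ vv r.concl.1 = vv r.concl.2} ∪
  {r | ∃ t s, r.prems = [(t, s)] ∧ vv t ≠ vv s}

theorem myB_sound {a : Tm ℕ × Tm ℕ} (h : ADeriv myB a) : vv a.1 = vv a.2 := by
  induction h with
  | app r hr hp ih =>
    rcases hr with ⟨_, h2⟩ | ⟨t, s, hts, hne⟩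
    · exact h2
    · exact absurd (ih (t, s) (by rw [hts]; simp)) hne

theorem ADeriv_mono {D D' : ABase ℕ} (h : D ⊆ D') {a : Tm ℕ × Tm ℕ}
    (hd : ADeriv D a) : ADeriv D' a := by
  induction hd with
  | app r hr _ ih => exact .app r (h hr) ih

theorem expl_of_false {D : ABase ℕ} (hD : myB ⊆ D) {t s : Tm ℕ}
    (hne : vv t ≠ vv s) (h : ADeriv D (t, s)) : ∀ a, ADeriv D a := by
  intro a
  refine .app ⟨[(t, s)], a⟩ (hD (Or.inr ⟨t, s, rfl, hne⟩)) ?_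
  simpa using h

theorem deriv_of_true {D : ABase ℕ} (hD : myB ⊆ D) {t s : Tm ℕ}
    (h : vv t = vv s) : ADeriv D (t, s) := by
  refine .app ⟨[], (t, s)⟩ (hD (Or.inl ⟨rfl, h⟩)) (by simp)

theorem num_closed : ∀ n : ℕ, (num n : Tm ℕ).Closed
  | 0 => trivial
  | n + 1 => num_closed n

theorem num_val (ι : ℕ → ℕ) (e : ℕ → ℕ) : ∀ n : ℕ, (num n : Tm ℕ).val ι e = n
  | 0 => rfl
  | n + 1 => by simp [num, Tm.val, num_val ι e n]

theorem spt_of_expl : ∀ (n : ℕ) (φ : Fm ℕ), φ.depth ≤ n → ∀ D : ABase ℕ,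
    (∀ a, ADeriv D a) → Spt D φ := by
  intro n
  induction n with
  | zero =>
    rintro (⟨t, s⟩ | _ | ⟨φ, ψ⟩ | ⟨φ, ψ⟩ | φ) h D hD
    · rw [Spt]; exact hD _
    · rw [Spt]; exact hD
    all_goals simp [Fm.depth] at h
  | succ n ih =>
    rintro (⟨t, s⟩ | _ | ⟨φ, ψ⟩ | ⟨φ, ψ⟩ | φ) h D hD
    · rw [Spt]; exact hD _
    · rw [Spt]; exact hD
    · simp only [Fm.depth] at h
      rw [Spt]
      exact fun D' hDD' _ => ih ψ (by omega) D' (fun a => ADeriv_mono hDD' (hD a))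
    · simp only [Fm.depth] at h
      rw [Spt]
      exact ⟨ih φ (by omega) D hD, ih ψ (by omega) D hD⟩
    · simp only [Fm.depth] at h
      rw [Spt]
      intro t ht
      exact ih (φ.inst t) (by rw [Fm.inst, Fm.depth_subst]; omega) D hD

/-- Main lemma: over a non-exploded extension of `myB`, support coincides with
truth in the standard model with all constants interpreted as 0. -/
theorem spt_iff_val : ∀ (n : ℕ) (φ : Fm ℕ), φ.depth ≤ n → ∀ D : ABase ℕ,
    myB ⊆ D → ¬ (∀ a, ADeriv D a) →
    (Spt D φ ↔ φ.Val (fun _ => 0) (fun _ => 0)) := by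
  intro n
  induction n with
  | zero =>
    rintro (⟨t, s⟩ | _ | ⟨φ, ψ⟩ | ⟨φ, ψ⟩ | φ) h D hD hne
    · rw [Spt]
      constructor
      · intro hd
        by_contra hc
        exact hne (expl_of_false hD hc hd)
      · exact fun hv => deriv_of_true hD hv
    · rw [Spt]
      exact iff_of_false hne id
    all_goals simp [Fm.depth] at h
  | succ n ih =>
    rintro (⟨t, s⟩ | _ | ⟨φ, ψ⟩ | ⟨φ, ψ⟩ | φ) h D hD hne
    · rw [Spt]
      constructor
      · intro hd
        by_contra hc
        exact hne (expl_of_false hD hc hd)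
      · exact fun hv => deriv_of_true hD hv
    · rw [Spt]
      exact iff_of_false hne id
    · simp only [Fm.depth] at h
      rw [Spt]
      constructor
      · intro hs hv
        exact (ih ψ (by omega) D hD hne).mp (hs D (fun _ h => h)
          ((ih φ (by omega) D hD hne).mpr hv))
      · intro hv D' hDD' hφ
        have hD' : myB ⊆ D' := fun r hr => hDD' (hD hr)
        by_cases hex : ∀ a, ADeriv D' a
        · exact spt_of_expl ψ.depth ψ le_rfl D' hex
        · exact (ih ψ (by omega) D' hD' hex).mpr
            (hv ((ih φ (by omega) D' hD' hex).mp hφ))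
    · simp only [Fm.depth] at h
      rw [Spt, ih φ (by omega) D hD hne, ih ψ (by omega) D hD hne]
      exact Iff.rfl
    · simp only [Fm.depth] at h
      rw [Spt]
      have key : ∀ t : Tm ℕ, (φ.inst t).Val (fun _ => 0) (fun _ => 0) ↔
          φ.Val (fun _ => 0) (consE (vv t) (fun _ => 0)) := by
        intro t
        rw [Fm.inst, Fm.val_subst, sub0_env]
        rfl
      constructor
      · intro hs m
        have := (ih (φ.inst (num m)) (by rw [Fm.inst, Fm.depth_subst]; omega) D hD hne).mp
          (hs (num m) (num_closed m))
        rw [key] at this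
        rwa [show vv (num m) = m from num_val _ _ m] at this
      · intro hv t ht
        refine (ih (φ.inst t) (by rw [Fm.inst, Fm.depth_subst]; omega) D hD hne).mpr ?_
        rw [key]
        exact hv (vv t)

theorem myB_not_expl : ¬ ∀ a : Tm ℕ × Tm ℕ, ADeriv myB a := by
  intro h
  have := myB_sound (h (Tm.zero, Tm.succ Tm.zero))
  simp [vv, Tm.val] at this

theorem spt_myB_iff (φ : Fm ℕ) :
    Spt myB φ ↔ φ.Val (fun _ => 0) (fun _ => 0) :=
  spt_iff_val φ.depth φ le_rfl myB (fun _ h => h) myB_not_expl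

end PTS


theorem support_incomplete_with_forced_constants :
    ∃ B : ABase ℕ, ConsistentA B ∧ (∀ α ∈ (PAAx : Set (Fm ℕ)), Spt B α) ∧
      (∀ i : ℕ, Spt B (Fm.eq (.const i) .zero)) ∧
      Spt B (Fm.eq (.const 1) .zero) ∧ ¬ Prv (PAAx : Set (Fm ℕ)) (Fm.eq (.const 1) .zero) ∧
      ∃ δ : Fm ℕ, Delta0 δ ∧ δ.Sentence ∧ Spt B δ ∧ ¬ Prv (PAAx : Set (Fm ℕ)) δ := by
  refine ⟨myB, ?_, ?_, ?_, ?_, ?_, ?_⟩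
  · intro h
    exact (spt_myB_iff Fm.falsum).mp h
  · intro α hα
    exact (spt_myB_iff α).mpr (PAAx_val _ _ α hα)
  · intro i
    exact (spt_myB_iff _).mpr rfl
  · exact (spt_myB_iff _).mpr rfl
  · intro h
    have := soundness h id (fun _ => 0) (fun ψ hψ => PAAx_val id (fun _ => 0) ψ hψ)
    simp [Fm.Val, Tm.val] at this
  · refine ⟨Fm.eq (.const 1) .zero, Delta0.eq _ _, ⟨trivial, trivial⟩,
      (spt_myB_iff _).mpr rfl, ?_⟩
    intro h
    have := soundness h id (fun _ => 0) (fun ψ hψ => PAAx_val id (fun _ => 0) ψ hψ)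
    simp [Fm.Val, Tm.val] at this
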